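/- For a C_0-semigroup (T_t) on a Banach space E and a Lévy process Y, the two processes V(t) := ∫_{(0,t]} T_{t−s} dY(s) and Z(t) := ∫_{(0,t]} T_s dY(s) have identical one-dimensional (marginal) distributions: V(t) =_d Z(t) for every fixed t ≥ 0. -/

import Mathlib

open MeasureTheory Filter Topology

/-- Independent increments over all finite monotone families of times. -/
def HasIndepIncrements {Ω E : Type*} [MeasurableSpace Ω] [MeasurableSpace E]
    [NormedAddCommGroup E] (P : Measure Ω) (Z : ℝ → Ω → E) : Prop :=
  ∀ (n : ℕ) (t : Fin (n + 1) → ℝ), Monotone t →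
    ProbabilityTheory.iIndepFun
      (fun i : Fin n => fun ω => Z (t i.succ) ω - Z (t i.castSucc) ω) P

/-- Càdlàg paths: right continuous with left-hand limits. -/
def CadlagPaths {Ω E : Type*} [NormedAddCommGroup E] (Z : ℝ → Ω → E) : Prop :=
  ∀ ω : Ω, (∀ t : ℝ, ContinuousWithinAt (fun s => Z s ω) (Set.Ici t) t) ∧
    (∀ t : ℝ, 0 < t → ∃ l : E, Filter.Tendsto (fun s => Z s ω)
      (nhdsWithin t (Set.Iio t)) (nhds l))

/-- An `E`-valued Lévy process: càdlàg, starting at `0`, with stationary independent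
increments. -/
def IsLevyProcess {Ω E : Type*} [MeasurableSpace Ω] [MeasurableSpace E]
    [NormedAddCommGroup E] (P : Measure Ω) (Y : ℝ → Ω → E) : Prop :=
  (∀ t : ℝ, Measurable (Y t)) ∧
  (∀ᵐ ω ∂P, Y 0 ω = 0) ∧
  CadlagPaths Y ∧
  HasIndepIncrements P Y ∧
  (∀ s t : ℝ, 0 ≤ s → s ≤ t →
    P.map (fun ω => Y t ω - Y s ω) = P.map (Y (t - s)))

/-- `V = ∫_{(0,t]} g(s) dY(s)`, defined pathwise as the limit of Riemann-type sums
`∑ g(t_j) (Y(t_j) − Y(t_{j−1}))` over the uniform partitions of `(0, t]`. -/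
def IsRandomIntegralOn {Ω E : Type*} [NormedAddCommGroup E] [NormedSpace ℝ E]
    (g : ℝ → E →L[ℝ] E) (Y : ℝ → Ω → E) (t : ℝ) (V : Ω → E) : Prop :=
  ∀ ω : Ω, Filter.Tendsto
    (fun n : ℕ => ∑ j ∈ Finset.range n,
      g (((j : ℝ) + 1) * t / n) (Y (((j : ℝ) + 1) * t / n) ω - Y ((j : ℝ) * t / n) ω))
    Filter.atTop (nhds (V ω))

section Aux

open ProbabilityTheory

/-- The Riemann-type sum appearing in `IsRandomIntegralOn`. -/
noncomputable def RSum {Ω E : Type*} [NormedAddCommGroup E] [NormedSpace ℝ E]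
    (g : ℝ → E →L[ℝ] E) (Y : ℝ → Ω → E) (t : ℝ) (n : ℕ) (ω : Ω) : E :=
  ∑ j ∈ Finset.range n,
    g (((j : ℝ) + 1) * t / n) (Y (((j : ℝ) + 1) * t / n) ω - Y ((j : ℝ) * t / n) ω)

/-- The joint law of finitely many independent random variables is the product of the laws. -/
lemma aux_joint_law_eq_pi {Ω E : Type*} [MeasurableSpace Ω] [MeasurableSpace E]
    (P : Measure Ω) [IsProbabilityMeasure P] {n : ℕ} (X : Fin n → Ω → E)
    (hm : ∀ i, Measurable (X i))
    (h : iIndepFun X P) :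
    P.map (fun ω i => X i ω) = Measure.pi (fun i => P.map (X i)) := by
  haveI : ∀ i, IsProbabilityMeasure (P.map (X i)) :=
    fun i => Measure.isProbabilityMeasure_map (hm i).aemeasurable
  refine (Measure.pi_eq fun s hs => ?_).symm
  rw [Measure.map_apply (measurable_pi_lambda _ hm) (MeasurableSet.univ_pi hs)]
  have hpre : (fun ω i => X i ω) ⁻¹' Set.pi Set.univ s = ⋂ i ∈ Finset.univ, X i ⁻¹' s i := by
    ext ω; simp [Set.mem_pi]
  rw [hpre, h.measure_inter_preimage_eq_mul Finset.univ (fun i _ => hs i)]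
  exact Finset.prod_congr rfl fun i _ => (Measure.map_apply (hm i) (hs i)).symm

/-- Permuting coordinates preserves a product of identical (probability) measures. -/
lemma aux_measurePreserving_perm {E : Type*} [MeasurableSpace E]
    (μ : Measure E) [IsProbabilityMeasure μ] {n : ℕ} (e : Equiv.Perm (Fin n)) :
    MeasurePreserving (fun x : Fin n → E => fun j => x (e j))
      (Measure.pi fun _ : Fin n => μ) (Measure.pi fun _ : Fin n => μ) := by
  have hmeas : Measurable (fun x : Fin n → E => fun j => x (e j)) :=
    measurable_pi_lambda _ fun j => measurable_pi_apply _
  refine ⟨hmeas, ?_⟩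
  refine (Measure.pi_eq fun s hs => ?_).symm
  rw [Measure.map_apply hmeas (MeasurableSet.univ_pi hs)]
  have hpre : (fun x : Fin n → E => fun j => x (e j)) ⁻¹' Set.pi Set.univ s
      = Set.pi Set.univ fun i => s (e.symm i) := by
    ext x
    simp only [Set.mem_preimage, Set.mem_pi, Set.mem_univ, true_implies]
    constructor
    · intro h i; simpa using h (e.symm i)
    · intro h i; simpa using h (e i)
  rw [hpre, Measure.pi_pi]
  exact Equiv.prod_comp e.symm fun i => μ (s i)

/-- Permuting the (operator) coefficients of a sum of iid random variables does not change
the law of the sum. -/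
lemma aux_map_sum_perm {E : Type*} [NormedAddCommGroup E] [NormedSpace ℝ E]
    [MeasurableSpace E] [BorelSpace E] [SecondCountableTopology E]
    (μ : Measure E) [IsProbabilityMeasure μ] {n : ℕ}
    (c : Fin n → E →L[ℝ] E) (e : Equiv.Perm (Fin n)) :
    (Measure.pi fun _ : Fin n => μ).map (fun x => ∑ i, c (e i) (x i)) =
      (Measure.pi fun _ : Fin n => μ).map (fun x => ∑ i, c i (x i)) := by
  have hg : Measurable (fun x : Fin n → E => ∑ i, c i (x i)) :=
    Finset.measurable_sum _ fun i _ => (c i).measurable.comp (measurable_pi_apply i)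
  have hp := aux_measurePreserving_perm μ e.symm
  have hfe : (fun x : Fin n → E => ∑ i, c (e i) (x i))
      = (fun x : Fin n → E => ∑ i, c i (x i)) ∘ (fun x j => x (e.symm j)) := by
    funext x
    show ∑ i, c (e i) (x i) = ∑ i, c i (x (e.symm i))
    exact Fintype.sum_equiv e _ _ fun i => by rw [Equiv.symm_apply_apply]
  rw [hfe, ← Measure.map_map hg hp.measurable, hp.map_eq]

/-- The key one-`n` distributional identity: the shifted Riemann sum for `V` has the same law
as the Riemann sum for `Z`. -/
lemma aux_law_step {E : Type*} [NormedAddCommGroup E] [NormedSpace ℝ E]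
    [MeasurableSpace E] [BorelSpace E] [SecondCountableTopology E]
    {Ω : Type*} [MeasurableSpace Ω] (P : Measure Ω) [IsProbabilityMeasure P]
    (T : ℝ → E →L[ℝ] E)
    (hTsem : ∀ s t : ℝ, 0 ≤ s → 0 ≤ t → T (s + t) = (T s).comp (T t))
    (Y : ℝ → Ω → E) (hYmeas : ∀ s : ℝ, Measurable (Y s))
    (hInd : HasIndepIncrements P Y)
    (hstat : ∀ s t : ℝ, 0 ≤ s → s ≤ t →
      P.map (fun ω => Y t ω - Y s ω) = P.map (Y (t - s)))
    (t : ℝ) (ht : 0 < t) (n : ℕ) (hn : 0 < n) :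
    P.map (fun ω => T (t / n) (RSum (fun s => T (t - s)) Y t n ω))
      = P.map (RSum T Y t n) := by
  have hn' : (0 : ℝ) < n := Nat.cast_pos.2 hn
  -- the increments
  set Xf : Fin n → Ω → E := fun i ω =>
    Y ((((i : ℕ) : ℝ) + 1) * t / n) ω - Y (((i : ℕ) : ℝ) * t / n) ω with hXf
  have hXm : ∀ i, Measurable (Xf i) := fun i => (hYmeas _).sub (hYmeas _)
  -- independence of the increments
  have hindep : ProbabilityTheory.iIndepFun
      Xf P := by
    have hmono : Monotone (fun i : Fin (n + 1) => ((i : ℕ) : ℝ) * t / n) := by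
      intro i j hij
      have hcast : ((i : ℕ) : ℝ) ≤ ((j : ℕ) : ℝ) := by exact_mod_cast hij
      exact div_le_div_of_nonneg_right
        (mul_le_mul_of_nonneg_right hcast ht.le) hn'.le
    have h := hInd n (fun i : Fin (n + 1) => ((i : ℕ) : ℝ) * t / n) hmono
    have hfe : (fun i : Fin n => fun ω =>
        Y (((i.succ : ℕ) : ℝ) * t / n) ω - Y (((i.castSucc : ℕ) : ℝ) * t / n) ω) = Xf := by
      funext i ω
      have h1 : ((i.succ : ℕ) : ℝ) * t / n = (((i : ℕ) : ℝ) + 1) * t / n := by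
        rw [Fin.val_succ]; push_cast; ring
      have h2 : ((i.castSucc : ℕ) : ℝ) * t / n = ((i : ℕ) : ℝ) * t / n := by
        rw [Fin.coe_castSucc]
      rw [hXf, h1, h2]
    rwa [hfe] at h
  -- identical distributions of the increments
  set μ : Measure E := P.map (Y (t / n)) with hμ
  haveI : IsProbabilityMeasure μ := Measure.isProbabilityMeasure_map (hYmeas _).aemeasurable
  have hid : ∀ i : Fin n, P.map (Xf i) = μ := by
    intro i
    have h0 : (0 : ℝ) ≤ ((i : ℕ) : ℝ) * t / n := by positivity
    have hle : ((i : ℕ) : ℝ) * t / n ≤ (((i : ℕ) : ℝ) + 1) * t / n :=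
      div_le_div_of_nonneg_right
        (mul_le_mul_of_nonneg_right (by linarith) ht.le) hn'.le
    have h := hstat (((i : ℕ) : ℝ) * t / n) ((((i : ℕ) : ℝ) + 1) * t / n) h0 hle
    have harith : (((i : ℕ) : ℝ) + 1) * t / n - ((i : ℕ) : ℝ) * t / n = t / n := by
      field_simp
      ring
    rw [harith] at h
    exact h
  -- the joint law is the `n`-fold product of `μ`
  have hF : Measurable (fun ω (i : Fin n) => Xf i ω) := measurable_pi_lambda _ hXm
  have hjoint : P.map (fun ω (i : Fin n) => Xf i ω) = Measure.pi (fun _ : Fin n => μ) := by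
    rw [aux_joint_law_eq_pi P Xf hXm hindep]
    exact congrArg Measure.pi (funext hid)
  -- the two coefficient families
  set cV : Fin n → E →L[ℝ] E := fun i => T (t - ((i : ℕ) : ℝ) * t / n) with hcV
  set cZ : Fin n → E →L[ℝ] E := fun i => T ((((i : ℕ) : ℝ) + 1) * t / n) with hcZ
  have hgV : Measurable (fun x : Fin n → E => ∑ i, cV i (x i)) :=
    Finset.measurable_sum _ fun i _ => (cV i).measurable.comp (measurable_pi_apply i)
  have hgZ : Measurable (fun x : Fin n → E => ∑ i, cZ i (x i)) :=
    Finset.measurable_sum _ fun i _ => (cZ i).measurable.comp (measurable_pi_apply i)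
  -- rewrite the shifted Riemann sum for `V`
  have hWrepr : (fun ω => T (t / n) (RSum (fun s => T (t - s)) Y t n ω))
      = fun ω => ∑ i : Fin n, cV i (Xf i ω) := by
    funext ω
    rw [RSum, map_sum]
    rw [show (∑ i : Fin n, cV i (Xf i ω)) = ∑ j ∈ Finset.range n,
        T (t - (j : ℝ) * t / n)
          (Y (((j : ℝ) + 1) * t / n) ω - Y ((j : ℝ) * t / n) ω) from
      Fin.sum_univ_eq_sum_range
        (fun j => T (t - (j : ℝ) * t / n)
          (Y (((j : ℝ) + 1) * t / n) ω - Y ((j : ℝ) * t / n) ω)) n]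
    refine Finset.sum_congr rfl fun j hj => ?_
    have hjn : (j : ℝ) + 1 ≤ n := by
      exact_mod_cast Nat.succ_le_of_lt (Finset.mem_range.mp hj)
    have hu : (0 : ℝ) ≤ t - ((j : ℝ) + 1) * t / n := by
      rw [sub_nonneg, div_le_iff₀ hn']
      nlinarith [ht.le]
    have hcomp := hTsem (t / n) (t - ((j : ℝ) + 1) * t / n) (by positivity) hu
    have harith : t / n + (t - ((j : ℝ) + 1) * t / n) = t - (j : ℝ) * t / n := by
      field_simp
      ring
    rw [harith] at hcomp
    rw [← ContinuousLinearMap.comp_apply, ← hcomp]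
  -- rewrite the Riemann sum for `Z`
  have hZrepr : RSum T Y t n = fun ω => ∑ i : Fin n, cZ i (Xf i ω) := by
    funext ω
    exact (Fin.sum_univ_eq_sum_range
      (fun j => T (((j : ℝ) + 1) * t / n)
        (Y (((j : ℝ) + 1) * t / n) ω - Y ((j : ℝ) * t / n) ω)) n).symm
  -- the reversal permutation sends `cV` to `cZ`
  have hrev : ∀ i : Fin n, cV (Fin.revPerm i) = cZ i := by
    intro i
    have hval : ((Fin.revPerm i : Fin n) : ℕ) = n - ((i : ℕ) + 1) := by
      simp [Fin.revPerm_apply, Fin.val_rev]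
    have hi1 : (i : ℕ) + 1 ≤ n := i.isLt
    rw [hcV, hcZ]
    dsimp only
    rw [hval, Nat.cast_sub hi1]
    congr 1
    push_cast
    field_simp
    ring
  -- conclude
  rw [hWrepr, hZrepr]
  have hmapV : P.map (fun ω => ∑ i : Fin n, cV i (Xf i ω))
      = (Measure.pi fun _ : Fin n => μ).map (fun x => ∑ i, cV i (x i)) := by
    rw [← hjoint, Measure.map_map hgV hF]; rfl
  have hmapZ : P.map (fun ω => ∑ i : Fin n, cZ i (Xf i ω))
      = (Measure.pi fun _ : Fin n => μ).map (fun x => ∑ i, cZ i (x i)) := by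
    rw [← hjoint, Measure.map_map hgZ hF]; rfl
  rw [hmapV, hmapZ]
  calc (Measure.pi fun _ : Fin n => μ).map (fun x => ∑ i, cV i (x i))
      = (Measure.pi fun _ : Fin n => μ).map (fun x => ∑ i, cV (Fin.revPerm i) (x i)) :=
        (aux_map_sum_perm μ cV Fin.revPerm).symm
    _ = (Measure.pi fun _ : Fin n => μ).map (fun x => ∑ i, cZ i (x i)) := by
        congr 1; funext x; exact Finset.sum_congr rfl fun i _ => by rw [hrev i]

end Aux

/-- The processes `V(t) = ∫_{(0,t]} T_{t−s} dY(s)` and `Z(t) = ∫_{(0,t]} T_s dY(s)` built from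
a `C₀`-semigroup `T` and a Lévy process `Y` have identical one-dimensional marginal
distributions. -/
theorem randomIntegral_marginals_eq
    {E : Type*} [NormedAddCommGroup E] [NormedSpace ℝ E] [CompleteSpace E]
    [TopologicalSpace.SeparableSpace E] [MeasurableSpace E] [BorelSpace E]
    {Ω : Type*} [MeasurableSpace Ω] (P : Measure Ω) [IsProbabilityMeasure P]
    (T : ℝ → E →L[ℝ] E)
    (hT0 : T 0 = ContinuousLinearMap.id ℝ E)
    (hTsem : ∀ s t : ℝ, 0 ≤ s → 0 ≤ t → T (s + t) = (T s).comp (T t))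
    (hTcont : ∀ x : E, ContinuousOn (fun t => T t x) (Set.Ici (0 : ℝ)))
    (Y : ℝ → Ω → E) (hY : IsLevyProcess P Y)
    (V Z : ℝ → Ω → E) (hVmeas : ∀ t, Measurable (V t)) (hZmeas : ∀ t, Measurable (Z t))
    (hV : ∀ t : ℝ, 0 ≤ t → IsRandomIntegralOn (fun s => T (t - s)) Y t (V t))
    (hZ : ∀ t : ℝ, 0 ≤ t → IsRandomIntegralOn (fun s => T s) Y t (Z t)) :
    ∀ t : ℝ, 0 ≤ t → P.map (V t) = P.map (Z t) := by
  haveI : SecondCountableTopology E := UniformSpace.secondCountable_of_separable E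
  intro t ht0
  obtain ⟨hYmeas, hY0, hcad, hInd, hstat⟩ := hY
  rcases eq_or_lt_of_le ht0 with rfl | ht
  · -- `t = 0`: both integrals vanish identically
    have hVZ : V 0 = Z 0 := by
      funext ω
      have h1 := hV 0 le_rfl ω
      have h2 := hZ 0 le_rfl ω
      simp only [mul_zero, zero_div, sub_self, map_zero, Finset.sum_const_zero] at h1 h2
      exact (tendsto_nhds_unique h1 tendsto_const_nhds).trans
        (tendsto_nhds_unique h2 tendsto_const_nhds).symm
    rw [hVZ]
  · -- `t > 0`
    -- uniform bound on `‖T s‖` for `s ∈ [0, t]` (Banach–Steinhaus)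
    obtain ⟨M, hM⟩ : ∃ M, ∀ s : Set.Icc (0 : ℝ) t, ‖T s‖ ≤ M := by
      apply banach_steinhaus
      intro x
      obtain ⟨C, hC⟩ := (isCompact_Icc (a := (0 : ℝ)) (b := t)).exists_bound_of_continuousOn
        ((hTcont x).mono (fun s hs => hs.1))
      exact ⟨C, fun s => hC s s.2⟩
    -- strong continuity of the semigroup at `0` along `t / n`
    have hT0lim : ∀ x : E, Tendsto (fun n : ℕ => T (t / n) x) atTop (𝓝 x) := by
      intro x
      have hc : ContinuousWithinAt (fun s => T s x) (Set.Ici (0 : ℝ)) 0 :=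
        (hTcont x) 0 Set.self_mem_Ici
      have hseq : Tendsto (fun n : ℕ => t / (n : ℝ)) atTop (𝓝[Set.Ici (0 : ℝ)] 0) := by
        apply tendsto_nhdsWithin_of_tendsto_nhds_of_eventually_within
        · exact tendsto_const_div_atTop_nhds_zero_nat t
        · exact Filter.Eventually.of_forall fun n => div_nonneg ht.le (Nat.cast_nonneg n)
      have := hc.tendsto.comp hseq
      simpa [hT0, Function.comp_def] using this
    -- the shifted Riemann sums
    set W : ℕ → Ω → E := fun n ω => T (t / n) (RSum (fun s => T (t - s)) Y t n ω) with hWdef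
    have hSVmeas : ∀ n, Measurable (RSum (fun s => T (t - s)) Y t n) := fun n =>
      Finset.measurable_sum _ fun j _ => (T _).measurable.comp ((hYmeas _).sub (hYmeas _))
    have hWmeas : ∀ n, Measurable (W n) := fun n => (T _).measurable.comp (hSVmeas n)
    have hSZmeas : ∀ n, Measurable (RSum T Y t n) := fun n =>
      Finset.measurable_sum _ fun j _ => (T _).measurable.comp ((hYmeas _).sub (hYmeas _))
    -- equality of laws for each `n ≥ 1`
    have hlaw : ∀ n : ℕ, 0 < n → P.map (W n) = P.map (RSum T Y t n) := fun n hn =>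
      aux_law_step P T hTsem Y hYmeas hInd hstat t ht n hn
    -- pointwise convergence of the Riemann sums for `Z`
    have hZtend : ∀ ω, Tendsto (fun n => RSum T Y t n ω) atTop (𝓝 (Z t ω)) :=
      fun ω => hZ t ht0 ω
    -- pointwise convergence of the shifted Riemann sums to `V t`
    have hWtend : ∀ ω, Tendsto (fun n => W n ω) atTop (𝓝 (V t ω)) := by
      intro ω
      have hSV : Tendsto (fun n => RSum (fun s => T (t - s)) Y t n ω) atTop (𝓝 (V t ω)) :=
        hV t ht0 ω
      rw [tendsto_iff_norm_sub_tendsto_zero]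
      have hb : ∀ᶠ n in atTop, ‖W n ω - V t ω‖ ≤
          M * ‖RSum (fun s => T (t - s)) Y t n ω - V t ω‖ + ‖T (t / n) (V t ω) - V t ω‖ := by
        filter_upwards [eventually_ge_atTop 1] with n hn
        have hmem : t / (n : ℝ) ∈ Set.Icc (0 : ℝ) t :=
          ⟨by positivity, div_le_self ht.le (by exact_mod_cast hn)⟩
        have hdecomp : W n ω - V t ω =
            T (t / n) (RSum (fun s => T (t - s)) Y t n ω - V t ω)
              + (T (t / n) (V t ω) - V t ω) := by
          rw [hWdef]; simp only [map_sub]; abel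
        calc ‖W n ω - V t ω‖
            ≤ ‖T (t / n) (RSum (fun s => T (t - s)) Y t n ω - V t ω)‖
                + ‖T (t / n) (V t ω) - V t ω‖ := by rw [hdecomp]; exact norm_add_le _ _
          _ ≤ M * ‖RSum (fun s => T (t - s)) Y t n ω - V t ω‖
                + ‖T (t / n) (V t ω) - V t ω‖ := by
              gcongr
              exact le_trans ((T (t / n)).le_opNorm _)
                (mul_le_mul_of_nonneg_right (hM ⟨_, hmem⟩) (norm_nonneg _))
      have hlim : Tendsto (fun n : ℕ =>
          M * ‖RSum (fun s => T (t - s)) Y t n ω - V t ω‖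
            + ‖T (t / n) (V t ω) - V t ω‖) atTop (𝓝 0) := by
        have h1 : Tendsto (fun n => ‖RSum (fun s => T (t - s)) Y t n ω - V t ω‖)
            atTop (𝓝 0) := tendsto_iff_norm_sub_tendsto_zero.mp hSV
        have h2 : Tendsto (fun n : ℕ => ‖T (t / n) (V t ω) - V t ω‖) atTop (𝓝 0) :=
          tendsto_iff_norm_sub_tendsto_zero.mp (hT0lim (V t ω))
        simpa using (h1.const_mul M).add h2
      exact squeeze_zero' (Filter.Eventually.of_forall fun n => norm_nonneg _) hb hlim
    -- conclude via bounded continuous test functions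
    haveI : IsProbabilityMeasure (P.map (V t)) :=
      Measure.isProbabilityMeasure_map (hVmeas t).aemeasurable
    apply MeasureTheory.ext_of_forall_lintegral_eq_of_IsFiniteMeasure
    intro f
    have hfm : Measurable fun x : E => (f x : ENNReal) :=
      measurable_coe_nnreal_ennreal.comp f.continuous.measurable
    rw [lintegral_map hfm (hVmeas t), lintegral_map hfm (hZmeas t)]
    obtain ⟨C, hC⟩ := f.bounded
    set B : ENNReal := (f 0 : ENNReal) + ENNReal.ofReal C with hBdef
    have hBne : B ≠ ⊤ := by
      rw [hBdef]
      exact ENNReal.add_ne_top.2 ⟨ENNReal.coe_ne_top, ENNReal.ofReal_ne_top⟩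
    have hbound : ∀ x : E, (f x : ENNReal) ≤ B := by
      intro x
      have habs : |((f x) : ℝ) - ((f 0) : ℝ)| ≤ C := by
        simpa [NNReal.dist_eq] using hC x 0
      have h1 : ((f x) : ℝ) ≤ ((f 0) : ℝ) + C := by
        have h2 := abs_le.mp habs
        linarith [h2.2]
      have hC0 : (0 : ℝ) ≤ C := le_trans dist_nonneg (hC 0 0)
      calc (f x : ENNReal) = ENNReal.ofReal ((f x) : ℝ) := (ENNReal.ofReal_coe_nnreal).symm
        _ ≤ ENNReal.ofReal (((f 0) : ℝ) + C) := ENNReal.ofReal_le_ofReal h1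
        _ = B := by
            rw [hBdef, ENNReal.ofReal_add (f 0).coe_nonneg hC0, ENNReal.ofReal_coe_nnreal]
    have hDCT : ∀ (G : ℕ → Ω → E) (L : Ω → E), (∀ n, Measurable (G n)) →
        (∀ ω, Tendsto (fun n => G n ω) atTop (𝓝 (L ω))) →
        Tendsto (fun n => ∫⁻ ω, (f (G n ω) : ENNReal) ∂P) atTop
          (𝓝 (∫⁻ ω, (f (L ω) : ENNReal) ∂P)) := by
      intro G L hGm hGt
      refine tendsto_lintegral_of_dominated_convergence (fun _ => B)
        (fun n => hfm.comp (hGm n))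
        (fun n => Filter.Eventually.of_forall fun ω => hbound _)
        (by rw [lintegral_const, measure_univ, mul_one]; exact hBne)
        (Filter.Eventually.of_forall fun ω => ?_)
      exact ENNReal.tendsto_coe.2 ((f.continuous.tendsto _).comp (hGt ω))
    have hWlim := hDCT W (V t) hWmeas hWtend
    have hZlim := hDCT (fun n => RSum T Y t n) (Z t) hSZmeas hZtend
    have heq : ∀ᶠ n in atTop, ∫⁻ ω, (f (W n ω) : ENNReal) ∂P
        = ∫⁻ ω, (f (RSum T Y t n ω) : ENNReal) ∂P := by
      filter_upwards [eventually_gt_atTop 0] with n hn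
      rw [← lintegral_map hfm (hWmeas n), ← lintegral_map hfm (hSZmeas n), hlaw n hn]
    exact tendsto_nhds_unique (hWlim.congr' heq) hZlim
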